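/- Let K₁, …, Kₘ be Markov kernels on X such that there exist ε ∈ (0,1] and probability measures ν₁, …, νₘ on X with Kᵢ(x, A) ≥ ε νᵢ(A) for every i, x and measurable A. Let λ be a probability measure on X and let (X₀, Xₘ) have the joint law λ ⊗ (K₁⋯Kₘ) on X × X (i.e., X₀ ∼ λ and, given X₀ = x, Xₘ ∼ (K₁⋯Kₘ)(x, ·)). Then for all bounded measurable functions f, g: X → ℝ, |E[f(X₀) g(Xₘ)] − E[f(X₀)] E[g(Xₘ)]| ≤ 2 (1 − ε)ᵐ ‖f‖_∞ ‖g‖_∞. (This is the covariance mixing bound of Lemma 16: functionals of a uniformly minorized Markov chain at time lag m have covariance at most 2 ρᵐ times the product of their sup-norms, with ρ = 1 − ε.) -/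

import Mathlib

open MeasureTheory ProbabilityTheory

/-- The composed kernel `K₁⋯Kₘ`: `compChain K m` applies first `K 0`, then
`K 1`, …, then `K (m-1)` (these play the roles of `K₁, …, Kₘ`). -/
noncomputable def compChain {X : Type*} [MeasurableSpace X]
    (K : ℕ → Kernel X X) : ℕ → Kernel X X
  | 0 => Kernel.id
  | n + 1 => K n ∘ₖ compChain K n

instance compChain.isMarkovKernel {X : Type*} [MeasurableSpace X]
    (K : ℕ → Kernel X X) [∀ i, IsMarkovKernel (K i)] :
    ∀ n, IsMarkovKernel (compChain K n)
  | 0 => by rw [compChain]; infer_instance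
  | n + 1 => by
    rw [compChain]
    have := compChain.isMarkovKernel K n
    infer_instance

section Aux

variable {X : Type*} [MeasurableSpace X]

lemma aux_sm (κ : Kernel X X) [IsSFiniteKernel κ] {φ : X → ℝ} (hφ : Measurable φ) :
    StronglyMeasurable fun x => ∫ y, φ y ∂κ x :=
  MeasureTheory.StronglyMeasurable.integral_kernel_prod_right
    (f := fun _ y => φ y) ((hφ.comp measurable_snd).stronglyMeasurable)

lemma aux_int (μ : Measure X) [IsFiniteMeasure μ] {φ : X → ℝ} (hφ : AEStronglyMeasurable φ μ)
    {C : ℝ} (h : ∀ x, |φ x| ≤ C) : Integrable φ μ :=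
  Integrable.mono' (integrable_const C) hφ (ae_of_all _ h)

/-- Bochner integral against a composed kernel. -/
lemma aux_integral_comp (η κ : Kernel X X) [IsMarkovKernel η] [IsMarkovKernel κ] (a : X)
    {φ : X → ℝ} (hφ : Measurable φ) {C : ℝ} (hC : ∀ x, |φ x| ≤ C) :
    ∫ z, φ z ∂((η ∘ₖ κ) a) = ∫ y, ∫ z, φ z ∂η y ∂κ a := by
  have hrepr : (η ∘ₖ κ) a = ((κ a).compProd η).snd := by
    ext s hs
    rw [Kernel.comp_apply' _ _ _ hs, Measure.snd_apply hs,
      Measure.compProd_apply (measurable_snd hs)]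
    rfl
  rw [hrepr, Measure.snd, integral_map measurable_snd.aemeasurable
    hφ.aestronglyMeasurable]
  have hint : Integrable (fun p : X × X => φ p.2) ((κ a).compProd η) :=
    aux_int _ ((hφ.comp measurable_snd).aestronglyMeasurable) (fun p => hC p.2)
  exact Measure.integral_compProd hint

/-- Key one-step minorization inequalities. -/
lemma aux_step {μ ν : Measure X} [IsProbabilityMeasure μ] [IsProbabilityMeasure ν]
    {ε : ℝ} (hε0 : 0 < ε) (hle : (ENNReal.ofReal ε) • ν ≤ μ)
    {φ : X → ℝ} (hφ : Measurable φ) {a b : ℝ} (ha : ∀ x, a ≤ φ x) (hb : ∀ x, φ x ≤ b) :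
    ε * (∫ x, φ x ∂ν) + (1 - ε) * a ≤ ∫ x, φ x ∂μ ∧
      (∫ x, φ x ∂μ) ≤ ε * (∫ x, φ x ∂ν) + (1 - ε) * b := by
  have habs : ∀ x, |φ x| ≤ max |a| |b| := fun x =>
    abs_le.2 ⟨le_trans (neg_le_neg (le_max_left _ _)) (le_trans (neg_abs_le a) (ha x)),
      le_trans (hb x) (le_trans (le_abs_self b) (le_max_right _ _))⟩
  have hiμ : Integrable φ μ := aux_int μ hφ.aestronglyMeasurable habs
  have hiν : Integrable φ ν := aux_int ν hφ.aestronglyMeasurable habs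
  have htoReal : (ENNReal.ofReal ε).toReal = ε := ENNReal.toReal_ofReal hε0.le
  constructor
  · -- use φ - a ≥ 0
    have h1 : ∫ x, (φ x - a) ∂((ENNReal.ofReal ε) • ν) ≤ ∫ x, (φ x - a) ∂μ :=
      integral_mono_measure hle (ae_of_all _ fun x => sub_nonneg.2 (ha x))
        (hiμ.sub (integrable_const a))
    rw [integral_smul_measure, htoReal, smul_eq_mul, integral_sub hiν (integrable_const a),
      integral_sub hiμ (integrable_const a), integral_const, integral_const,
      probReal_univ, probReal_univ] at h1
    simp only [ENNReal.toReal_one, smul_eq_mul, one_mul] at h1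
    nlinarith [h1]
  · -- use b - φ ≥ 0
    have h1 : ∫ x, (b - φ x) ∂((ENNReal.ofReal ε) • ν) ≤ ∫ x, (b - φ x) ∂μ :=
      integral_mono_measure hle (ae_of_all _ fun x => sub_nonneg.2 (hb x))
        ((integrable_const b).sub hiμ)
    rw [integral_smul_measure, htoReal, smul_eq_mul, integral_sub (integrable_const b) hiν,
      integral_sub (integrable_const b) hiμ, integral_const, integral_const,
      probReal_univ, probReal_univ] at h1
    simp only [ENNReal.toReal_one, smul_eq_mul, one_mul] at h1
    nlinarith [h1]

/-- Oscillation contraction along the chain. -/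
lemma aux_chain_osc (K : ℕ → Kernel X X) [∀ i, IsMarkovKernel (K i)]
    {ε : ℝ} (hε0 : 0 < ε)
    (ν : ℕ → Measure X) (hν : ∀ i, IsProbabilityMeasure (ν i)) :
    ∀ n, (∀ i < n, ∀ x : X, ∀ A : Set X, MeasurableSet A →
        ENNReal.ofReal ε * ν i A ≤ K i x A) →
      ∀ (φ : X → ℝ), Measurable φ → ∀ (a b : ℝ), (∀ y, a ≤ φ y) → (∀ y, φ y ≤ b) →
      ∀ x x', (∫ y, φ y ∂(compChain K n x)) - (∫ y, φ y ∂(compChain K n x')) ≤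
        (1 - ε) ^ n * (b - a) := by
  intro n
  induction n with
  | zero =>
    intro _ φ hφ a b ha hb x x'
    simp only [compChain, Kernel.id_apply, integral_dirac' _ _ hφ.stronglyMeasurable,
      pow_zero, one_mul]
    linarith [hb x, ha x']
  | succ n ih =>
    intro hmin φ hφ a b ha hb x x'
    haveI := hν n
    have hCφ : ∀ y, |φ y| ≤ max |a| |b| := fun y =>
      abs_le.2 ⟨le_trans (neg_le_neg (le_max_left _ _)) (le_trans (neg_abs_le a) (ha y)),
        le_trans (hb y) (le_trans (le_abs_self b) (le_max_right _ _))⟩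
    have hcomp : ∀ z : X, (∫ y, φ y ∂(compChain K (n + 1) z)) =
        ∫ y, (∫ w, φ w ∂(K n y)) ∂(compChain K n z) := by
      intro z
      show (∫ y, φ y ∂((K n ∘ₖ compChain K n) z)) = _
      exact aux_integral_comp _ _ _ hφ hCφ
    rw [hcomp x, hcomp x']
    set ψ : X → ℝ := fun y => ∫ w, φ w ∂(K n y) with hψdef
    have hψm : Measurable ψ := (aux_sm (K n) hφ).measurable
    have hle : ∀ y : X, (ENNReal.ofReal ε) • (ν n) ≤ K n y := by
      intro y
      rw [Measure.le_iff]
      intro s hs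
      rw [Measure.smul_apply, smul_eq_mul]
      exact hmin n (Nat.lt_succ_self n) y s hs
    set c := ∫ w, φ w ∂(ν n) with hc
    have hψbounds : ∀ y, ε * c + (1 - ε) * a ≤ ψ y ∧ ψ y ≤ ε * c + (1 - ε) * b := by
      intro y
      exact aux_step hε0 (hle y) hφ ha hb
    have := ih (fun i hi => hmin i (hi.trans (Nat.lt_succ_self n)))
      ψ hψm (ε * c + (1 - ε) * a) (ε * c + (1 - ε) * b)
      (fun y => (hψbounds y).1) (fun y => (hψbounds y).2) x x'
    calc (∫ y, ψ y ∂(compChain K n x)) - (∫ y, ψ y ∂(compChain K n x')) ≤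
        (1 - ε) ^ n * ((ε * c + (1 - ε) * b) - (ε * c + (1 - ε) * a)) := this
      _ = (1 - ε) ^ (n + 1) * (b - a) := by ring

end Aux


/-- covariance mixing bound of Lemma 16. If the Markov
kernels `K₁, …, Kₘ` all admit a Doeblin minorization `Kᵢ(x, A) ≥ ε νᵢ(A)` with a
common `ε ∈ (0,1]`, and `(X₀, Xₘ)` has joint law `λ ⊗ (K₁⋯Kₘ)`, then for all
bounded measurable `f, g`,
`|E[f(X₀)g(Xₘ)] − E[f(X₀)]E[g(Xₘ)]| ≤ 2 (1 − ε)ᵐ ‖f‖_∞ ‖g‖_∞`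
(stated with arbitrary upper bounds `Cf, Cg ≥ 0` for `|f|, |g|`). -/
theorem covariance_mixing_bound
    {X : Type*} [MeasurableSpace X]
    (m : ℕ) (K : ℕ → Kernel X X) [∀ i, IsMarkovKernel (K i)]
    (ε : ℝ) (hε0 : 0 < ε) (hε1 : ε ≤ 1)
    (ν : ℕ → Measure X) (hν : ∀ i, IsProbabilityMeasure (ν i))
    (hmin : ∀ i < m, ∀ x : X, ∀ A : Set X, MeasurableSet A →
      ENNReal.ofReal ε * ν i A ≤ K i x A)
    (lam : Measure X) [IsProbabilityMeasure lam]
    (f g : X → ℝ) (hf : Measurable f) (hg : Measurable g)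
    (Cf Cg : ℝ) (hCf0 : 0 ≤ Cf) (hCg0 : 0 ≤ Cg)
    (hCf : ∀ x, |f x| ≤ Cf) (hCg : ∀ x, |g x| ≤ Cg) :
    |(∫ p, f p.1 * g p.2 ∂(lam.compProd (compChain K m))) -
        (∫ p, f p.1 ∂(lam.compProd (compChain K m))) *
          (∫ p, g p.2 ∂(lam.compProd (compChain K m)))| ≤
      2 * (1 - ε) ^ m * Cf * Cg := by

  set P := compChain K m with hP
  haveI : IsMarkovKernel P := compChain.isMarkovKernel K m
  set μ := lam.compProd P with hμ
  haveI : IsProbabilityMeasure μ := by rw [hμ]; infer_instance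
  set F : X → ℝ := fun x => ∫ y, g y ∂P x with hF
  have hFm : Measurable F := (aux_sm P hg).measurable
  have hFb : ∀ x, |F x| ≤ Cg := by
    intro x
    rw [hF]
    have := norm_integral_le_of_norm_le_const (μ := P x) (C := Cg) (f := g)
      (ae_of_all _ fun y => by rw [Real.norm_eq_abs]; exact hCg y)
    simpa [Real.norm_eq_abs] using this
  set c := ∫ x, F x ∂lam with hc
  -- osc bound
  have hosc : ∀ x x', F x - F x' ≤ (1 - ε) ^ m * (2 * Cg) := by
    intro x x'
    have := aux_chain_osc K hε0 ν hν m hmin g hg (-Cg) Cg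
      (fun y => neg_le_of_abs_le (hCg y)) (fun y => le_of_abs_le (hCg y)) x x'
    calc F x - F x' ≤ (1 - ε) ^ m * (Cg - (-Cg)) := this
      _ = (1 - ε) ^ m * (2 * Cg) := by ring
  have hFlamInt : Integrable F lam := aux_int _ hFm.aestronglyMeasurable hFb
  -- |F x - c| ≤ (1-ε)^m * 2Cg
  have hFc : ∀ x, |F x - c| ≤ (1 - ε) ^ m * (2 * Cg) := by
    intro x
    have h1 : F x - c = ∫ x', (F x - F x') ∂lam := by
      rw [integral_sub (integrable_const _) hFlamInt, integral_const, probReal_univ]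
      simp [hc]
    rw [abs_le]
    constructor
    · have : c - F x = ∫ x', (F x' - F x) ∂lam := by
        rw [integral_sub hFlamInt (integrable_const _), integral_const, probReal_univ]
        simp [hc]
      have hb : (∫ x', (F x' - F x) ∂lam) ≤ (1 - ε) ^ m * (2 * Cg) := by
        refine le_trans (integral_mono (hFlamInt.sub (integrable_const _))
          (integrable_const _) (fun x' => hosc x' x)) ?_
        simp
      linarith [this ▸ hb]
    · have hb : (∫ x', (F x - F x') ∂lam) ≤ (1 - ε) ^ m * (2 * Cg) := by
        refine le_trans (integral_mono ((integrable_const _).sub hFlamInt)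
          (integrable_const _) (fun x' => hosc x x')) ?_
        simp
      linarith [h1 ▸ hb]
  -- compute the three integrals via compProd
  have hint_fg : Integrable (fun p : X × X => f p.1 * g p.2) μ := by
    refine aux_int _ ((hf.comp measurable_fst).mul (hg.comp measurable_snd)).aestronglyMeasurable
      (C := Cf * Cg) (fun p => ?_)
    rw [abs_mul]
    exact mul_le_mul (hCf p.1) (hCg p.2) (abs_nonneg _) hCf0
  have hint_f : Integrable (fun p : X × X => f p.1) μ :=
    aux_int _ (hf.comp measurable_fst).aestronglyMeasurable (fun p => hCf p.1)
  have hint_g : Integrable (fun p : X × X => g p.2) μ :=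
    aux_int _ (hg.comp measurable_snd).aestronglyMeasurable (fun p => hCg p.2)
  have h1 : (∫ p, f p.1 * g p.2 ∂μ) = ∫ x, f x * F x ∂lam := by
    rw [Measure.integral_compProd hint_fg]
    refine integral_congr_ae (ae_of_all _ fun x => ?_)
    show (∫ b, f x * g b ∂P x) = f x * ∫ y, g y ∂P x
    exact integral_const_mul _ _
  have h2 : (∫ p, f p.1 ∂μ) = ∫ x, f x ∂lam := by
    rw [Measure.integral_compProd hint_f]
    refine integral_congr_ae (ae_of_all _ fun x => ?_)
    simp
  have h3 : (∫ p, g p.2 ∂μ) = c := by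
    rw [Measure.integral_compProd hint_g]
  rw [h1, h2, h3]
  -- rewrite as ∫ f (F - c)
  have hfF : Integrable (fun x => f x * F x) lam := by
    refine aux_int _ (hf.mul hFm).aestronglyMeasurable (C := Cf * Cg) (fun x => ?_)
    rw [abs_mul]
    exact mul_le_mul (hCf x) (hFb x) (abs_nonneg _) hCf0
  have hflam : Integrable f lam := aux_int _ hf.aestronglyMeasurable hCf
  have key : (∫ x, f x * F x ∂lam) - (∫ x, f x ∂lam) * c =
      ∫ x, f x * (F x - c) ∂lam := by
    have : ∀ x, f x * (F x - c) = f x * F x - f x * c := fun x => by ring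
    simp_rw [this]
    rw [integral_sub hfF (hflam.mul_const c), integral_mul_const]
  rw [key]
  have hbound : |∫ x, f x * (F x - c) ∂lam| ≤ Cf * ((1 - ε) ^ m * (2 * Cg)) := by
    have := norm_integral_le_of_norm_le_const
      (μ := lam) (C := Cf * ((1 - ε) ^ m * (2 * Cg)))
      (f := fun x => f x * (F x - c)) ?_
    · simpa [Real.norm_eq_abs] using this
    · refine ae_of_all _ fun x => ?_
      rw [Real.norm_eq_abs, abs_mul]
      exact mul_le_mul (hCf x) (hFc x) (abs_nonneg _) hCf0
  calc |∫ x, f x * (F x - c) ∂lam| ≤ Cf * ((1 - ε) ^ m * (2 * Cg)) := hbound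
    _ = 2 * (1 - ε) ^ m * Cf * Cg := by ring
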